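/- Let R be a commutative ring and G a finite group. If M is a module over the group ring R[G] whose underlying R-module (by restriction of scalars) is projective, then Ext¹_{R[G]}(M, R[G]) = 0. -/

import Mathlib

open CategoryTheory

universe u v

section AuxProj

/-- If `A` is a free `R`-module and `N` is a projective `A`-module, then `N` is projective
as an `R`-module. -/
theorem aux_projective_restrict (R A : Type*) [CommRing R] [Ring A] [Algebra R A]
    [Module.Free R A] (N : Type*) [AddCommGroup N] [Module A N] [Module R N]
    [IsScalarTower R A N] [Module.Projective A N] : Module.Projective R N := by
  obtain ⟨s, hs⟩ := Module.projective_def'.mp ‹Module.Projective A N›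
  exact Module.Projective.of_split
    (LinearMap.restrictScalars R s)
    (LinearMap.restrictScalars R (Finsupp.linearCombination A (id : N → N)))
    (by ext x; exact DFunLike.congr_fun hs x)

end AuxProj

section AuxIso

/-- Extensionality for morphisms in `ModuleCat`, with explicit module instances. -/
lemma auxHomExt {S : Type v} [Ring S] {M N : ModuleCat.{u} S} {f g : M ⟶ N}
    (h : ∀ x, f x = g x) : f = g :=
  ModuleCat.hom_ext (@LinearMap.ext S S ↑M ↑N _ _ _ _ M.isModule N.isModule (RingHom.id S) _ _ h)

/-- An additive equivalence between `ℤ`-modules gives an isomorphism in `ModuleCat ℤ`. -/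
noncomputable def auxAddEquivIso {M N : ModuleCat.{u} ℤ} (e : ↑M ≃+ ↑N) : M ≅ N where
  hom := ConcreteCategory.ofHom (C := ModuleCat ℤ) <| @LinearMap.mk ℤ ℤ _ _ (RingHom.id ℤ) M N _ _ M.isModule N.isModule
    { toFun := e, map_add' := fun x y => map_add e x y }
    (fun n x => by
      simpa using @map_intCast_smul ↑M ↑N _ _ _ _ _ e.toAddMonoidHom ℤ ℤ _ _
        M.isModule N.isModule n x)
  inv := ConcreteCategory.ofHom (C := ModuleCat ℤ) <| @LinearMap.mk ℤ ℤ _ _ (RingHom.id ℤ) N M _ _ N.isModule M.isModule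
    { toFun := e.symm, map_add' := fun x y => map_add e.symm x y }
    (fun n x => by
      simpa using @map_intCast_smul ↑N ↑M _ _ _ _ _ e.symm.toAddMonoidHom ℤ ℤ _ _
        N.isModule M.isModule n x)
  hom_inv_id := auxHomExt (fun x => e.symm_apply_apply x)
  inv_hom_id := auxHomExt (fun x => e.apply_symm_apply x)

lemma auxAddEquivIso_hom_apply {M N : ModuleCat.{u} ℤ} (e : ↑M ≃+ ↑N) (x : M) :
    (auxAddEquivIso e).hom x = e x := rfl

end AuxIso

section AuxEquiv

variable (R : Type u) [CommRing R] (G : Type u) [Group G] [Fintype G]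

set_option linter.unusedSectionVars false

/-- Evaluating a sum of singles. -/
theorem aux_sum_single_apply (c : G → R) (t : G) :
    (∑ g : G, MonoidAlgebra.single g (c g)).coeff t = c t := by
  classical
  rw [MonoidAlgebra.coeff_sum, Finset.sum_apply']
  simp only [MonoidAlgebra.coeff_single]
  rw [Finset.sum_eq_single t (fun b _ hb => Finsupp.single_eq_of_ne' hb)
    (fun h => absurd (Finset.mem_univ t) h)]
  exact Finsupp.single_eq_same

/-- Evaluation of a monoid algebra element at `1`. -/
noncomputable def auxε : MonoidAlgebra R G →+ R :=
  (Finsupp.applyAddHom (1 : G)).comp MonoidAlgebra.coeffAddEquiv.toAddMonoidHom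

lemma auxε_apply (y : MonoidAlgebra R G) : auxε R G y = y.coeff 1 := rfl

variable {X : ModuleCat.{u} (MonoidAlgebra R G)}

lemma aux_res_smul (r : R) (x : ↑X) :
    (algebraMap R (MonoidAlgebra R G) r) • x
      = r • (show ↑((ModuleCat.restrictScalars (algebraMap R (MonoidAlgebra R G))).obj X)
          from x) := rfl

/-- The underlying function of the inverse map `Hom_R(X, R) → Hom_{R[G]}(X, R[G])`. -/
noncomputable def auxT
    (φ : (ModuleCat.restrictScalars (algebraMap R (MonoidAlgebra R G))).obj X ⟶
      ModuleCat.of R R) (x : ↑X) : MonoidAlgebra R G :=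
  ∑ g : G, MonoidAlgebra.single g (φ (MonoidAlgebra.single g⁻¹ (1 : R) • x))

lemma aux_phi_single_smul
    (φ : (ModuleCat.restrictScalars (algebraMap R (MonoidAlgebra R G))).obj X ⟶
      ModuleCat.of R R) (a : G) (s : R) (x : ↑X) :
    φ (MonoidAlgebra.single a s • x)
      = s • φ (MonoidAlgebra.single a (1 : R) • x) := by
  have h2 : MonoidAlgebra.single a s • x
      = (algebraMap R (MonoidAlgebra R G) s) • MonoidAlgebra.single a (1 : R) • x := by
    rw [smul_smul]
    congr 1
    rw [MonoidAlgebra.single_eq_algebraMap_mul_of]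
    rfl
  rw [h2, aux_res_smul, map_smul]

lemma auxT_add
    (φ : (ModuleCat.restrictScalars (algebraMap R (MonoidAlgebra R G))).obj X ⟶
      ModuleCat.of R R) (x y : ↑X) :
    auxT R G φ (x + y) = auxT R G φ x + auxT R G φ y := by
  unfold auxT
  rw [← Finset.sum_add_distrib]
  refine Finset.sum_congr rfl fun g _ => ?_
  rw [smul_add]
  rw [show φ (MonoidAlgebra.single g⁻¹ (1:R) • x + MonoidAlgebra.single g⁻¹ (1:R) • y)
      = φ (MonoidAlgebra.single g⁻¹ (1:R) • x) + φ (MonoidAlgebra.single g⁻¹ (1:R) • y)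
    from map_add φ.hom _ _]
  exact MonoidAlgebra.single_add _ _ _

lemma auxT_single
    (φ : (ModuleCat.restrictScalars (algebraMap R (MonoidAlgebra R G))).obj X ⟶
      ModuleCat.of R R) (h : G) (s : R) (x : ↑X) :
    auxT R G φ (MonoidAlgebra.single h s • x)
      = MonoidAlgebra.single h s * auxT R G φ x := by
  unfold auxT
  ext t
  rw [aux_sum_single_apply, MonoidAlgebra.coeff_single_mul_apply, aux_sum_single_apply,
    smul_smul, MonoidAlgebra.single_mul_single, one_mul, aux_phi_single_smul,
    mul_inv_rev, inv_inv]
  rfl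

lemma auxT_smul
    (φ : (ModuleCat.restrictScalars (algebraMap R (MonoidAlgebra R G))).obj X ⟶
      ModuleCat.of R R) (a : MonoidAlgebra R G) (x : ↑X) :
    auxT R G φ (a • x) = a * auxT R G φ x := by
  induction a using MonoidAlgebra.induction_on with
  | of g =>
      rw [show MonoidAlgebra.of R G g = MonoidAlgebra.single g (1 : R) from rfl]
      exact auxT_single R G φ g 1 x
  | add f g hf hg => rw [add_smul, auxT_add, hf, hg, add_mul]
  | smul r f hf =>
      have h1 : (r • f) • x = (algebraMap R (MonoidAlgebra R G) r) • f • x := by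
        rw [Algebra.smul_def, mul_smul]
      have h2 : auxT R G φ ((algebraMap R (MonoidAlgebra R G) r) • f • x)
          = r • auxT R G φ (f • x) := by
        unfold auxT
        rw [Finset.smul_sum]
        refine Finset.sum_congr rfl fun g _ => ?_
        have h3 : MonoidAlgebra.single g⁻¹ (1 : R) •
              (algebraMap R (MonoidAlgebra R G) r) • f • x
            = (algebraMap R (MonoidAlgebra R G) r) •
              MonoidAlgebra.single g⁻¹ (1 : R) • f • x := by
          rw [smul_smul, ← Algebra.commutes, mul_smul]
        rw [h3, aux_res_smul, map_smul]
        exact (MonoidAlgebra.smul_single r g _).symm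
      rw [h1, h2, hf, smul_mul_assoc]

/-- The natural additive equivalence `Hom_{R[G]}(X, R[G]) ≃+ Hom_R(X, R)`. -/
noncomputable def auxHomEquiv (X : ModuleCat.{u} (MonoidAlgebra R G)) :
    (X ⟶ ModuleCat.of (MonoidAlgebra R G) (MonoidAlgebra R G)) ≃+
      ((ModuleCat.restrictScalars (algebraMap R (MonoidAlgebra R G))).obj X ⟶
        ModuleCat.of R R) where
  toFun F := ConcreteCategory.ofHom (C := ModuleCat R)
    { toFun := fun x => auxε R G (F x)
      map_add' := fun x y => by
        show auxε R G (F (x + y)) = auxε R G (F x) + auxε R G (F y)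
        exact (congrArg (auxε R G) (map_add F.hom x y)).trans (map_add _ _ _)
      map_smul' := fun r x => by
        show auxε R G (F ((algebraMap R (MonoidAlgebra R G) r) • x)) = r * auxε R G (F x)
        have h1 : (algebraMap R (MonoidAlgebra R G) r) • x
            = MonoidAlgebra.single (1 : G) r • x := by
          congr 1
        rw [h1, show F (MonoidAlgebra.single (1 : G) r • x)
            = MonoidAlgebra.single (1 : G) r • F x from map_smul F.hom _ x]
        show ((MonoidAlgebra.single (1 : G) r : MonoidAlgebra R G) *
            (show MonoidAlgebra R G from F x)).coeff 1
          = r * (show MonoidAlgebra R G from F x).coeff 1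
        exact MonoidAlgebra.coeff_single_one_mul _ r 1 }
  invFun φ := ConcreteCategory.ofHom (C := ModuleCat (MonoidAlgebra R G))
    { toFun := auxT R G φ
      map_add' := auxT_add R G φ
      map_smul' := fun a x => by
        show auxT R G φ (a • x) = a * auxT R G φ x
        exact auxT_smul R G φ a x }
  left_inv F := auxHomExt fun x => by
    show auxT R G _ x = F x
    unfold auxT
    apply MonoidAlgebra.ext; apply Finsupp.ext; intro t
    rw [aux_sum_single_apply]
    show auxε R G (F (MonoidAlgebra.single t⁻¹ (1 : R) • x)) = _
    rw [show F (MonoidAlgebra.single t⁻¹ (1 : R) • x)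
        = MonoidAlgebra.single t⁻¹ (1 : R) • F x from map_smul F.hom _ x]
    show ((MonoidAlgebra.single t⁻¹ (1 : R) : MonoidAlgebra R G) *
        (show MonoidAlgebra R G from F x)).coeff 1 = (show MonoidAlgebra R G from F x).coeff t
    rw [MonoidAlgebra.coeff_single_mul_apply, inv_inv, mul_one, one_mul]
  right_inv φ := auxHomExt fun x => by
    show auxε R G (auxT R G φ x) = φ x
    unfold auxT
    rw [auxε_apply, aux_sum_single_apply, inv_one]
    rw [show (MonoidAlgebra.single (1 : G) (1 : R) : MonoidAlgebra R G) = 1 from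
      (MonoidAlgebra.one_def).symm]
    exact congrArg φ.hom (one_smul (MonoidAlgebra R G) (show ↑X from x))
  map_add' F F' := auxHomExt fun x => by
    show auxε R G ((F + F') x) = auxε R G (F x) + auxε R G (F' x)
    exact map_add (auxε R G) _ _

lemma auxHomEquiv_naturality {X Y : ModuleCat.{u} (MonoidAlgebra R G)} (u : X ⟶ Y)
    (F : Y ⟶ ModuleCat.of (MonoidAlgebra R G) (MonoidAlgebra R G)) :
    auxHomEquiv R G X (u ≫ F)
      = (ModuleCat.restrictScalars (algebraMap R (MonoidAlgebra R G))).map u ≫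
          auxHomEquiv R G Y F :=
  auxHomExt fun x => rfl

end AuxEquiv

/-- Let `R` be a commutative ring and `G` a finite group.  If `M` is an
`R[G]`-module whose underlying `R`-module (by restriction of scalars) is projective, then
`Ext¹_{R[G]}(M, R[G]) = 0`. -/
theorem statement6 (R : Type u) [CommRing R] (G : Type u) [Group G] [Finite G]
    (M : Type u) [AddCommGroup M] [Module R M] [Module (MonoidAlgebra R G) M]
    [IsScalarTower R (MonoidAlgebra R G) M] [Module.Projective R M] :
    Subsingleton
      (((_root_.Ext ℤ (ModuleCat.{u} (MonoidAlgebra R G)) 1).obj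
        (Opposite.op (ModuleCat.of (MonoidAlgebra R G) M))).obj
          (ModuleCat.of (MonoidAlgebra R G) (MonoidAlgebra R G))) := by
  haveI := Fintype.ofFinite G
  classical
  set res : ModuleCat.{u} (MonoidAlgebra R G) ⥤ ModuleCat.{u} R :=
    ModuleCat.restrictScalars (algebraMap R (MonoidAlgebra R G)) with hres
  haveI : res.Additive := { map_add := rfl }
  haveI : Limits.PreservesFiniteLimits res := ⟨fun J _ _ => ⟨fun {K} => inferInstance⟩⟩
  haveI : Limits.PreservesFiniteColimits res := ⟨fun J _ _ => ⟨fun {K} => inferInstance⟩⟩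
  haveI : res.PreservesHomology := inferInstance
  haveI : Module.Free R (MonoidAlgebra R G) :=
    Module.Free.of_basis (MonoidAlgebra.basis G R)
  set M' : ModuleCat.{u} (MonoidAlgebra R G) := ModuleCat.of (MonoidAlgebra R G) M with hM'
  let P : ProjectiveResolution M' := (HasProjectiveResolution.out (Z := M')).some
  have hproj : ∀ n, Projective (res.obj (P.complex.X n)) := fun n => by
    letI : Module R ↑(P.complex.X n) := (res.obj (P.complex.X n)).isModule
    letI : IsScalarTower R (MonoidAlgebra R G) ↑(P.complex.X n) := ⟨fun r a x => by
      show (r • a) • x = algebraMap R (MonoidAlgebra R G) r • (a • x)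
      rw [Algebra.smul_def, mul_smul]⟩
    haveI : Module.Projective (MonoidAlgebra R G) ↑(P.complex.X n) :=
      (IsProjective.iff_projective _).mpr (P.projective n)
    exact (IsProjective.iff_projective _).mp
      (aux_projective_restrict R (MonoidAlgebra R G) ↑(P.complex.X n))
  let e₁ := (HomologicalComplex.singleMapHomologicalComplex res (ComplexShape.down ℕ) 0).app M'
  haveI : IsIso e₁.hom := inferInstance
  let Q : ProjectiveResolution (res.obj M') :=
    { complex := (res.mapHomologicalComplex (ComplexShape.down ℕ)).obj P.complex
      projective := fun n => hproj n
      π := (res.mapHomologicalComplex (ComplexShape.down ℕ)).map P.π ≫ e₁.hom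
      quasiIso := inferInstance }
  haveI : Projective (res.obj M') := by
    have e : ModuleCat.of R M ≅ res.obj M' := LinearEquiv.toModuleIso (X₂ := ↑(res.obj M'))
        (g₂ := (res.obj M').isAddCommGroup) (m₂ := (res.obj M').isModule)
        { toFun := id, invFun := id,
          left_inv := fun _ => rfl, right_inv := fun _ => rfl,
          map_add' := fun _ _ => rfl,
          map_smul' := fun r x => (algebraMap_smul (MonoidAlgebra R G) r x).symm }
    exact Projective.of_iso e inferInstance
  let eC : P.complex.linearYonedaObj ℤ
        (ModuleCat.of (MonoidAlgebra R G) (MonoidAlgebra R G)) ≅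
      Q.complex.linearYonedaObj ℤ (ModuleCat.of R R) :=
    HomologicalComplex.Hom.isoOfComponents
      (fun n => auxAddEquivIso (auxHomEquiv R G (P.complex.X n)))
      (fun i j _ => auxHomExt fun F => by
        show res.map (P.complex.d j i) ≫ (auxHomEquiv R G (P.complex.X i)) F
          = (auxHomEquiv R G (P.complex.X j)) (P.complex.d j i ≫ F)
        exact (auxHomEquiv_naturality R G (P.complex.d j i) F).symm)
  have h1 : Limits.IsZero (((_root_.Ext ℤ (ModuleCat.{u} R) 1).obj
      (Opposite.op (res.obj M'))).obj (ModuleCat.of R R)) :=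
    isZero_Ext_succ_of_projective _ _ 0
  have h2 : Limits.IsZero
      ((Q.complex.linearYonedaObj ℤ (ModuleCat.of R R)).homology 1) :=
    h1.of_iso (Q.isoExt 1 (ModuleCat.of R R)).symm
  have h3 : Limits.IsZero ((P.complex.linearYonedaObj ℤ
      (ModuleCat.of (MonoidAlgebra R G) (MonoidAlgebra R G))).homology 1) :=
    h2.of_iso ((HomologicalComplex.homologyFunctor (ModuleCat.{u} ℤ)
      (ComplexShape.up ℕ) 1).mapIso eC)
  have h4 : Limits.IsZero (((_root_.Ext ℤ (ModuleCat.{u} (MonoidAlgebra R G)) 1).obj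
      (Opposite.op M')).obj (ModuleCat.of (MonoidAlgebra R G) (MonoidAlgebra R G))) :=
    h3.of_iso (P.isoExt 1 (ModuleCat.of (MonoidAlgebra R G) (MonoidAlgebra R G)))
  have h5 := h4.eq_of_src (𝟙 _) 0
  have h6 : ∀ x : (((_root_.Ext ℤ (ModuleCat.{u} (MonoidAlgebra R G)) 1).obj
      (Opposite.op M')).obj (ModuleCat.of (MonoidAlgebra R G) (MonoidAlgebra R G))),
      x = 0 := fun x => by
    simpa using LinearMap.congr_fun (congrArg ModuleCat.Hom.hom h5) x
  exact ⟨fun a b => by rw [h6 a, h6 b]⟩
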